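/- Let B and C be finite families of finite subsets of a finite type V such that every set in B is disjoint from every set in C, and let A = B ∨ C. Then for every b ∈ B and every c ∈ C one has |A| ≤ deg_{|c|}(A) · deg_{|b|}(A). -/

import Mathlib

/-- The `r`-th degree of a finite family `A` of subsets of a finite type `V`. -/
def famDeg {V : Type*} [Fintype V] [DecidableEq V]
    (A : Finset (Finset V)) (r : ℕ) : ℕ :=
  ((Finset.univ : Finset V).powersetCard r).sup fun b =>
    (A.filter fun a => b ⊆ a).card

/-- The join `B ∨ C` of two families: all pairwise unions. -/
def famJoin {V : Type*} [DecidableEq V]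
    (B C : Finset (Finset V)) : Finset (Finset V) :=
  (B ×ˢ C).image fun p => p.1 ∪ p.2

theorem stmt_5 {V : Type*} [Fintype V] [DecidableEq V]
    (B C : Finset (Finset V))
    (hdisj : ∀ b ∈ B, ∀ c ∈ C, Disjoint b c) :
    ∀ b ∈ B, ∀ c ∈ C,
      (famJoin B C).card ≤ famDeg (famJoin B C) c.card * famDeg (famJoin B C) b.card := by
  classical
  intro b hb c hc
  set A := famJoin B C with hA
  have key : ∀ a ∈ A, ∃ p : Finset V × Finset V, p.1 ∈ B ∧ p.2 ∈ C ∧ p.1 ∪ p.2 = a := by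
    intro a ha
    simp only [hA, famJoin, Finset.mem_image, Finset.mem_product] at ha
    obtain ⟨p, ⟨h1, h2⟩, h3⟩ := ha
    exact ⟨p, h1, h2, h3⟩
  choose! g hg1 hg2 hg3 using key
  set Sc := A.filter fun a => c ⊆ a with hSc
  set Sb := A.filter fun a => b ⊆ a with hSb
  have hmemA : ∀ x ∈ B, ∀ y ∈ C, x ∪ y ∈ A := by
    intro x hx y hy
    simp only [hA, famJoin, Finset.mem_image, Finset.mem_product]
    exact ⟨(x, y), ⟨hx, hy⟩, rfl⟩
  have hcard : A.card ≤ (Sc ×ˢ Sb).card := by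
    apply Finset.card_le_card_of_injOn (fun a => ((g a).1 ∪ c, b ∪ (g a).2))
    · intro a ha
      simp only [Finset.mem_coe, Finset.mem_product, hSc, hSb, Finset.mem_filter]
      exact ⟨⟨hmemA _ (hg1 a ha) _ hc, Finset.subset_union_right⟩,
        ⟨hmemA _ hb _ (hg2 a ha), Finset.subset_union_left⟩⟩
    · intro a1 h1 a2 h2 heq
      simp only [Prod.mk.injEq] at heq
      have e1 : (g a1).1 = (g a2).1 := by
        have d1 := hdisj _ (hg1 a1 h1) _ hc
        have d2 := hdisj _ (hg1 a2 h2) _ hc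
        have := congrArg (fun s => s \ c) heq.1
        simpa [Finset.union_sdiff_cancel_right d1, Finset.union_sdiff_cancel_right d2]
          using this
      have e2 : (g a1).2 = (g a2).2 := by
        have d1 := hdisj _ hb _ (hg2 a1 h1)
        have d2 := hdisj _ hb _ (hg2 a2 h2)
        have := congrArg (fun s => s \ b) heq.2
        simpa [Finset.union_sdiff_cancel_left d1, Finset.union_sdiff_cancel_left d2]
          using this
      calc a1 = (g a1).1 ∪ (g a1).2 := (hg3 a1 h1).symm
        _ = (g a2).1 ∪ (g a2).2 := by rw [e1, e2]
        _ = a2 := hg3 a2 h2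
  have hScdeg : Sc.card ≤ famDeg A c.card := by
    apply Finset.le_sup (f := fun s => (A.filter fun a => s ⊆ a).card)
    exact Finset.mem_powersetCard.mpr ⟨Finset.subset_univ _, rfl⟩
  have hSbdeg : Sb.card ≤ famDeg A b.card := by
    apply Finset.le_sup (f := fun s => (A.filter fun a => s ⊆ a).card)
    exact Finset.mem_powersetCard.mpr ⟨Finset.subset_univ _, rfl⟩
  calc A.card ≤ (Sc ×ˢ Sb).card := hcard
    _ = Sc.card * Sb.card := Finset.card_product _ _
    _ ≤ famDeg A c.card * famDeg A b.card := Nat.mul_le_mul hScdeg hSbdeg
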